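/- Let ρ and σ be density operators on a finite-dimensional complex Hilbert space ℋ with supp(ρ) ⊆ supp(σ), let τ be a classical density operator on a finite-dimensional Hilbert space ℋ' (i.e., τ is diagonal in a fixed orthonormal basis of ℋ'), and let α ∈ (0,1) ∪ (1,∞). Then D_α^𝕄(τ ⊗ ρ ‖ τ ⊗ σ) = D_α^𝕄(ρ‖σ). -/

import Mathlib

open Matrix
open scoped ComplexOrder Kronecker

noncomputable section

/-- Real power of a Hermitian matrix via functional calculus on its support
(Moore–Penrose convention); junk value `0` for non-Hermitian input. -/
def Matrix.rpowH {ι : Type*} [Fintype ι] [DecidableEq ι] (A : Matrix ι ι ℂ) (p : ℝ) :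
    Matrix ι ι ℂ :=
  if hA : A.IsHermitian then
    (hA.eigenvectorUnitary : Matrix ι ι ℂ) *
      Matrix.diagonal (fun i => ((hA.eigenvalues i ^ p : ℝ) : ℂ)) *
      star (hA.eigenvectorUnitary : Matrix ι ι ℂ)
  else 0

/-- Real part of the trace. -/
def retr {ι : Type*} [Fintype ι] (A : Matrix ι ι ℂ) : ℝ :=
  (Matrix.trace A).re

open scoped Classical in
/-- Classical Rényi divergence of order `α` of two (finitely supported) probability
mass functions, with value `+∞` when `α > 1` and absolute continuity fails. -/
def renyiDivE (α : ℝ) {k : ℕ} (p q : Fin k → ℝ) : EReal :=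
  if α < 1 ∨ ∀ i, q i = 0 → p i = 0 then
    (((α - 1)⁻¹ * Real.log (∑ i, p i ^ α * q i ^ (1 - α)) : ℝ) : EReal)
  else (⊤ : EReal)

/-- Measured Rényi divergence: supremum of classical Rényi divergences of the outcome
distributions over all finite POVMs. -/
def measuredRenyiDiv {ι : Type*} [Fintype ι] [DecidableEq ι]
    (α : ℝ) (ρ σ : Matrix ι ι ℂ) : EReal :=
  ⨆ (k : ℕ) (P : Fin k → Matrix ι ι ℂ) (_ : ∀ i, (P i).PosSemidef) (_ : ∑ i, P i = 1),
    renyiDivE α (fun i => retr (ρ * P i)) (fun i => retr (σ * P i))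

section AuxLemmas

set_option linter.unusedSectionVars false

/-- Hölder / weighted AM-GM sum inequality for exponents `α, 1-α` with `0 < α < 1`. -/
private theorem aux_holder01 {n : Type*} {α : ℝ} (hα0 : 0 < α) (hα1 : α < 1) (s : Finset n)
    (a b : n → ℝ) (ha : ∀ j, 0 ≤ a j) (hb : ∀ j, 0 ≤ b j) :
    ∑ j ∈ s, a j ^ α * b j ^ (1 - α) ≤ (∑ j ∈ s, a j) ^ α * (∑ j ∈ s, b j) ^ (1 - α) := by
  set A := ∑ j ∈ s, a j with hA
  set B := ∑ j ∈ s, b j with hB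
  have hA0 : 0 ≤ A := Finset.sum_nonneg fun j _ => ha j
  have hB0 : 0 ≤ B := Finset.sum_nonneg fun j _ => hb j
  rcases eq_or_lt_of_le hA0 with hA' | hA'
  · have hz : ∀ j ∈ s, a j = 0 :=
      (Finset.sum_eq_zero_iff_of_nonneg (fun j _ => ha j)).mp hA'.symm
    have : ∑ j ∈ s, a j ^ α * b j ^ (1 - α) = 0 :=
      Finset.sum_eq_zero fun j hj => by rw [hz j hj, Real.zero_rpow hα0.ne', zero_mul]
    rw [this]
    positivity
  · rcases eq_or_lt_of_le hB0 with hB' | hB'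
    · have hz : ∀ j ∈ s, b j = 0 :=
        (Finset.sum_eq_zero_iff_of_nonneg (fun j _ => hb j)).mp hB'.symm
      have h1 : ∑ j ∈ s, a j ^ α * b j ^ (1 - α) = 0 :=
        Finset.sum_eq_zero fun j hj => by
          rw [hz j hj, Real.zero_rpow (by linarith : (1:ℝ) - α ≠ 0), mul_zero]
      rw [h1, ← hB', Real.zero_rpow (by linarith : (1:ℝ) - α ≠ 0), mul_zero]
    · have key : ∀ j ∈ s, a j ^ α * b j ^ (1 - α) ≤
          A ^ α * B ^ (1 - α) * (α * (a j / A) + (1 - α) * (b j / B)) := by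
        intro j hj
        have h1 : a j ^ α * b j ^ (1 - α)
            = A ^ α * B ^ (1 - α) * ((a j / A) ^ α * (b j / B) ^ (1 - α)) := by
          rw [Real.div_rpow (ha j) hA0, Real.div_rpow (hb j) hB0, div_mul_div_comm,
            mul_div_cancel₀]
          positivity
        rw [h1]
        refine mul_le_mul_of_nonneg_left ?_ (by positivity)
        exact Real.geom_mean_le_arith_mean2_weighted hα0.le (by linarith)
          (div_nonneg (ha j) hA0) (div_nonneg (hb j) hB0) (by ring)
      calc ∑ j ∈ s, a j ^ α * b j ^ (1 - α)
          ≤ ∑ j ∈ s, A ^ α * B ^ (1 - α) * (α * (a j / A) + (1 - α) * (b j / B)) :=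
            Finset.sum_le_sum key
        _ = A ^ α * B ^ (1 - α) := by
            rw [← Finset.mul_sum, Finset.sum_add_distrib, ← Finset.mul_sum, ← Finset.mul_sum,
              ← Finset.sum_div, ← Finset.sum_div, ← hA, ← hB, div_self hA'.ne', div_self hB'.ne']
            ring

/-- Reverse Hölder sum inequality for `α > 1` under absolute continuity. -/
private theorem aux_holder_gt1 {n : Type*} {α : ℝ} (hα : 1 < α) (s : Finset n)
    (a b : n → ℝ) (ha : ∀ j, 0 ≤ a j) (hb : ∀ j, 0 ≤ b j)
    (hab : ∀ j ∈ s, b j = 0 → a j = 0) :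
    (∑ j ∈ s, a j) ^ α * (∑ j ∈ s, b j) ^ (1 - α) ≤ ∑ j ∈ s, a j ^ α * b j ^ (1 - α) := by
  have hα0 : (0:ℝ) < α := by linarith
  set θ : ℝ := α⁻¹ with hθ
  have hθ0 : 0 < θ := by positivity
  have hθ1 : θ < 1 := by
    rw [hθ, inv_lt_one_iff₀]; right; exact hα
  set a' : n → ℝ := fun j => a j ^ α * b j ^ (1 - α) with ha'def
  have ha' : ∀ j, 0 ≤ a' j := fun j =>
    mul_nonneg (Real.rpow_nonneg (ha j) _) (Real.rpow_nonneg (hb j) _)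
  have key : ∀ j ∈ s, a' j ^ θ * b j ^ (1 - θ) = a j := by
    intro j hj
    rcases eq_or_lt_of_le (hb j) with h0 | hpos
    · have ha0 : a j = 0 := hab j hj h0.symm
      simp only [ha'def, ← h0, ha0, Real.zero_rpow hα0.ne', zero_mul,
        Real.zero_rpow hθ0.ne']
    · have e1 : a' j ^ θ = a j * b j ^ ((1 - α) * θ) := by
        rw [ha'def]
        rw [Real.mul_rpow (Real.rpow_nonneg (ha j) _) (Real.rpow_nonneg (hb j) _),
          ← Real.rpow_mul (ha j), ← Real.rpow_mul (hb j),
          mul_inv_cancel₀ hα0.ne', Real.rpow_one]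
      rw [e1, mul_assoc, ← Real.rpow_add hpos]
      have : (1 - α) * θ + (1 - θ) = 0 := by
        rw [hθ]; field_simp; ring
      rw [this, Real.rpow_zero, mul_one]
  have H := aux_holder01 hθ0 hθ1 s a' b ha' hb
  rw [Finset.sum_congr rfl key] at H
  set A := ∑ j ∈ s, a j with hA
  set B := ∑ j ∈ s, b j with hB
  set S := ∑ j ∈ s, a' j with hS
  have hA0 : 0 ≤ A := Finset.sum_nonneg fun j _ => ha j
  have hB0 : 0 ≤ B := Finset.sum_nonneg fun j _ => hb j
  have hS0 : 0 ≤ S := Finset.sum_nonneg fun j _ => ha' j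
  rcases eq_or_lt_of_le hB0 with hB' | hB'
  · have hzb : ∀ j ∈ s, b j = 0 :=
      (Finset.sum_eq_zero_iff_of_nonneg (fun j _ => hb j)).mp hB'.symm
    have hza : A = 0 := Finset.sum_eq_zero fun j hj => hab j hj (hzb j hj)
    rw [hza, Real.zero_rpow hα0.ne', zero_mul]
    exact hS0
  · have h2 : A ^ α ≤ (S ^ θ * B ^ (1 - θ)) ^ α := Real.rpow_le_rpow hA0 H hα0.le
    have h3 : (S ^ θ * B ^ (1 - θ)) ^ α = S * B ^ (α - 1) := by
      rw [Real.mul_rpow (Real.rpow_nonneg hS0 _) (Real.rpow_nonneg hB0 _),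
        ← Real.rpow_mul hS0, ← Real.rpow_mul hB0, inv_mul_cancel₀ hα0.ne', Real.rpow_one]
      congr 1
      rw [hθ]; field_simp
    rw [h3] at h2
    calc A ^ α * B ^ (1 - α) ≤ S * B ^ (α - 1) * B ^ (1 - α) :=
          mul_le_mul_of_nonneg_right h2 (Real.rpow_nonneg hB0 _)
      _ = S := by
          rw [mul_assoc, ← Real.rpow_add hB', show α - 1 + (1 - α) = 0 by ring,
            Real.rpow_zero, mul_one]

/-- Positivity of the Hölder sum for a pair of distributions with abs. continuity. -/
private theorem aux_sum_pos {α : ℝ} (hα0 : 0 < α) {m : ℕ} (u v : Fin m → ℝ)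
    (hu : ∀ i, 0 ≤ u i) (hv : ∀ i, 0 ≤ v i) (huv : ∀ i, v i = 0 → u i = 0)
    (h1 : ∑ i, u i = 1) :
    0 < ∑ i, u i ^ α * v i ^ (1 - α) := by
  obtain ⟨i0, hi0⟩ : ∃ i, 0 < u i := by
    by_contra hcon
    push_neg at hcon
    have : ∑ i, u i = 0 := Finset.sum_eq_zero fun i _ => le_antisymm (hcon i) (hu i)
    rw [this] at h1; norm_num at h1
  have hv0 : 0 < v i0 := by
    rcases eq_or_lt_of_le (hv i0) with h | h
    · exact absurd (huv i0 h.symm) hi0.ne'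
    · exact h
  exact Finset.sum_pos'
    (fun i _ => mul_nonneg (Real.rpow_nonneg (hu i) _) (Real.rpow_nonneg (hv i) _))
    ⟨i0, Finset.mem_univ _, mul_pos (Real.rpow_pos_of_pos hi0 _) (Real.rpow_pos_of_pos hv0 _)⟩

variable {ι : Type*} [Fintype ι] {m : Type*} [Fintype m]

private theorem aux_trace_hermform (σ : Matrix ι ι ℂ) (C : Matrix m ι ℂ) :
    (σ * (Cᴴ * C)).trace = ∑ r, star (star (C r)) ⬝ᵥ σ *ᵥ (star (C r)) := by
  simp only [Matrix.trace, Matrix.diag, Matrix.mul_apply, Matrix.conjTranspose_apply,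
    dotProduct, Matrix.mulVec, Pi.star_apply, star_star, Finset.mul_sum,
    Finset.sum_mul]
  have h1 : ∑ x : ι, ∑ y : ι, ∑ r : m, σ x y * (star (C r y) * C r x)
      = ∑ x : ι, ∑ r : m, ∑ y : ι, σ x y * (star (C r y) * C r x) :=
    Finset.sum_congr rfl fun x _ => Finset.sum_comm
  rw [h1, Finset.sum_comm]
  exact Finset.sum_congr rfl fun r _ => Finset.sum_congr rfl fun x _ =>
    Finset.sum_congr rfl fun y _ => by ring

private theorem aux_psd_iff {n : Type*} [Fintype n] {P : Matrix n n ℂ} :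
    P.PosSemidef ↔ ∃ C : Matrix n n ℂ, P = Cᴴ * C := by
  classical
  open scoped MatrixOrder in
  constructor
  · intro h
    obtain ⟨B, hB⟩ := CStarAlgebra.nonneg_iff_eq_star_mul_self.mp h.nonneg
    exact ⟨B, hB⟩
  · rintro ⟨C, rfl⟩
    exact Matrix.posSemidef_conjTranspose_mul_self C

private theorem aux_retr_mul_nonneg {σ P : Matrix ι ι ℂ} (hσ : σ.PosSemidef)
    (hP : P.PosSemidef) : 0 ≤ retr (σ * P) := by
  obtain ⟨C, rfl⟩ := aux_psd_iff.mp hP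
  rw [retr, aux_trace_hermform, Complex.re_sum]
  exact Finset.sum_nonneg fun r _ => (Complex.le_def.mp (hσ.dotProduct_mulVec_nonneg (star (C r)))).1

private theorem aux_retr_supp {ρ σ P : Matrix ι ι ℂ} (hσ : σ.PosSemidef) (hP : P.PosSemidef)
    (hsupp : ∀ v : ι → ℂ, σ.mulVec v = 0 → ρ.mulVec v = 0)
    (h : retr (σ * P) = 0) : retr (ρ * P) = 0 := by
  obtain ⟨C, rfl⟩ := aux_psd_iff.mp hP
  rw [retr, aux_trace_hermform, Complex.re_sum] at h
  have hz : ∀ r ∈ Finset.univ, (star (star (C r)) ⬝ᵥ σ *ᵥ (star (C r))).re = 0 :=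
    (Finset.sum_eq_zero_iff_of_nonneg
      (fun r _ => (Complex.le_def.mp (hσ.dotProduct_mulVec_nonneg (star (C r)))).1)).mp h
  rw [retr, aux_trace_hermform, Complex.re_sum]
  refine Finset.sum_eq_zero fun r hr => ?_
  have h0 : star (star (C r)) ⬝ᵥ σ *ᵥ (star (C r)) = 0 := by
    have hle := hσ.dotProduct_mulVec_nonneg (star (C r))
    exact Complex.ext (hz r hr) (Complex.le_def.mp hle).2.symm
  have hv : ρ.mulVec (star (C r)) = 0 :=
    hsupp _ ((hσ.dotProduct_mulVec_zero_iff (star (C r))).mp h0)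
  rw [hv, dotProduct_zero, Complex.zero_re]

private theorem aux_sum_retr {k : ℕ} (M : Matrix ι ι ℂ) (P : Fin k → Matrix ι ι ℂ) :
    ∑ i, retr (M * P i) = retr (M * ∑ i, P i) := by
  simp [retr, Finset.mul_sum, Matrix.trace_sum, Complex.re_sum]

private theorem aux_kron_conjT {a b c d : Type*} (A : Matrix a b ℂ) (B : Matrix c d ℂ) :
    (A ⊗ₖ B)ᴴ = Aᴴ ⊗ₖ Bᴴ := by
  ext ⟨i, j⟩ ⟨k, l⟩
  simp [Matrix.conjTranspose_apply, Matrix.kroneckerMap_apply]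

variable {κ : Type*} [Fintype κ] [DecidableEq κ] [DecidableEq ι]

private theorem aux_blk_psd (Q : Matrix (κ × ι) (κ × ι) ℂ) (hQ : Q.PosSemidef) (j : κ) :
    (Matrix.of fun x y => Q (j, x) (j, y)).PosSemidef := by
  refine Matrix.PosSemidef.of_dotProduct_mulVec_nonneg ?_ ?_
  · ext x y
    simp only [Matrix.conjTranspose_apply, Matrix.of_apply]
    exact hQ.1.apply (j, x) (j, y)
  · intro v
    have h := hQ.dotProduct_mulVec_nonneg (fun p => if p.1 = j then v p.2 else 0)
    have e : star (fun p : κ × ι => if p.1 = j then v p.2 else 0) ⬝ᵥ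
        Q *ᵥ (fun p : κ × ι => if p.1 = j then v p.2 else 0)
        = star v ⬝ᵥ (Matrix.of fun x y => Q (j, x) (j, y)) *ᵥ v := by
      simp only [dotProduct, Matrix.mulVec, Pi.star_apply, Matrix.of_apply,
        Fintype.sum_prod_type]
      simp [apply_ite (starRingEnd ℂ), ite_mul]
    rw [← e]; exact h

private theorem aux_blk_sum {k : ℕ} (Q : Fin k → Matrix (κ × ι) (κ × ι) ℂ)
    (hQ1 : ∑ i, Q i = 1) (j : κ) :
    (∑ i, Matrix.of fun x y => Q i (j, x) (j, y)) = (1 : Matrix ι ι ℂ) := by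
  ext x y
  have h := congrFun (congrFun hQ1 (j, x)) (j, y)
  simp only [Matrix.sum_apply, Matrix.of_apply, Matrix.one_apply] at h ⊢
  rw [h]
  simp [Prod.ext_iff]

private theorem aux_trace_blk (t : κ → ℝ) (M : Matrix ι ι ℂ) (Q : Matrix (κ × ι) (κ × ι) ℂ) :
    retr (((Matrix.diagonal fun j => ((t j : ℝ) : ℂ)) ⊗ₖ M) * Q)
      = ∑ j, t j * retr (M * Matrix.of fun x y => Q (j, x) (j, y)) := by
  have key : (((Matrix.diagonal fun j => ((t j : ℝ) : ℂ)) ⊗ₖ M) * Q).trace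
      = ∑ j, (t j : ℂ) * (M * Matrix.of fun x y => Q (j, x) (j, y)).trace := by
    simp only [Matrix.trace, Matrix.diag, Matrix.mul_apply, Matrix.kroneckerMap_apply,
      Matrix.diagonal_apply, Matrix.of_apply, Fintype.sum_prod_type, ite_mul, zero_mul,
      Finset.mul_sum]
    simp only [Finset.sum_ite_irrel, Finset.sum_const_zero, Finset.sum_ite_eq,
      Finset.mem_univ, if_true]
    exact Finset.sum_congr rfl fun j _ => Finset.sum_congr rfl fun x _ =>
      Finset.sum_congr rfl fun y _ => by ring
  rw [retr, key, Complex.re_sum]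
  exact Finset.sum_congr rfl fun j _ => by rw [Complex.re_ofReal_mul]; rfl

private theorem aux_lift_psd (P : Matrix ι ι ℂ) (hP : P.PosSemidef) :
    ((1 : Matrix κ κ ℂ) ⊗ₖ P).PosSemidef := by
  obtain ⟨C, rfl⟩ := aux_psd_iff.mp hP
  refine aux_psd_iff.mpr ⟨(1 : Matrix κ κ ℂ) ⊗ₖ C, ?_⟩
  rw [aux_kron_conjT, ← Matrix.mul_kronecker_mul, Matrix.conjTranspose_one, one_mul]

private theorem aux_lift_sum {k : ℕ} (P : Fin k → Matrix ι ι ℂ) (hP1 : ∑ i, P i = 1) :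
    ∑ i, (1 : Matrix κ κ ℂ) ⊗ₖ P i = 1 := by
  have h : ∑ i, (1 : Matrix κ κ ℂ) ⊗ₖ P i = (1 : Matrix κ κ ℂ) ⊗ₖ (∑ i, P i) := by
    ext p q
    simp [Matrix.sum_apply, Matrix.kroneckerMap_apply, Finset.mul_sum]
  rw [h, hP1, Matrix.one_kronecker_one]

private theorem aux_lift_retr (t : κ → ℝ) (ht1 : ∑ i, t i = 1) (M P : Matrix ι ι ℂ) :
    retr (((Matrix.diagonal fun j => ((t j : ℝ) : ℂ)) ⊗ₖ M) * ((1 : Matrix κ κ ℂ) ⊗ₖ P))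
      = retr (M * P) := by
  rw [← Matrix.mul_kronecker_mul, mul_one, retr, Matrix.trace_kronecker,
    Matrix.trace_diagonal]
  have h1 : ∑ i, ((t i : ℝ) : ℂ) = 1 := by
    rw [← Complex.ofReal_sum, ht1, Complex.ofReal_one]
  rw [h1, one_mul]
  rfl

end AuxLemmas

/-- tensoring with a common classical state does not change the
measured Rényi divergence. For density operators `ρ, σ` with `supp ρ ⊆ supp σ`, a
classical (diagonal in the fixed basis) density operator `τ = diagonal t`, and
`α ∈ (0,1) ∪ (1,∞)`: `D_α^𝕄(τ ⊗ ρ ‖ τ ⊗ σ) = D_α^𝕄(ρ‖σ)`. -/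
theorem measured_renyi_tensor_classical
    {κ : Type*} [Fintype κ] [DecidableEq κ]
    {ι : Type*} [Fintype ι] [DecidableEq ι]
    (ρ σ : Matrix ι ι ℂ)
    (hρ : ρ.PosSemidef) (hρtr : ρ.trace = 1)
    (hσ : σ.PosSemidef) (hσtr : σ.trace = 1)
    (hsupp : ∀ v : ι → ℂ, σ.mulVec v = 0 → ρ.mulVec v = 0)
    (t : κ → ℝ) (ht : ∀ i, 0 ≤ t i) (ht1 : ∑ i, t i = 1)
    (τ : Matrix κ κ ℂ) (hτ : τ = Matrix.diagonal fun i => ((t i : ℝ) : ℂ))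
    (α : ℝ) (hα : (0 < α ∧ α < 1) ∨ 1 < α) :
    measuredRenyiDiv α (τ ⊗ₖ ρ) (τ ⊗ₖ σ) = measuredRenyiDiv α ρ σ := by
  have hα0 : 0 < α := by rcases hα with ⟨h, -⟩ | h <;> linarith
  have hac : ∀ P : Matrix ι ι ℂ, P.PosSemidef → retr (σ * P) = 0 → retr (ρ * P) = 0 :=
    fun P hP h => aux_retr_supp hσ hP hsupp h
  subst hτ
  apply le_antisymm
  · -- big ≤ small
    rw [measuredRenyiDiv]
    refine iSup_le fun k => iSup_le fun Q => iSup_le fun hQ => iSup_le fun hQ1 => ?_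
    set B : Fin k → κ → Matrix ι ι ℂ := fun i j => Matrix.of fun x y => Q i (j, x) (j, y)
      with hBdef
    have hBpsd : ∀ i j, (B i j).PosSemidef := fun i j => aux_blk_psd (Q i) (hQ i) j
    have hBsum : ∀ j, ∑ i, B i j = 1 := fun j => aux_blk_sum Q hQ1 j
    set pj : κ → Fin k → ℝ := fun j i => retr (ρ * B i j) with hpjdef
    set qj : κ → Fin k → ℝ := fun j i => retr (σ * B i j) with hqjdef
    have hpj0 : ∀ j i, 0 ≤ pj j i := fun j i => aux_retr_mul_nonneg hρ (hBpsd i j)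
    have hqj0 : ∀ j i, 0 ≤ qj j i := fun j i => aux_retr_mul_nonneg hσ (hBpsd i j)
    have hacj : ∀ j i, qj j i = 0 → pj j i = 0 := fun j i h => hac _ (hBpsd i j) h
    have hpj1 : ∀ j, ∑ i, pj j i = 1 := by
      intro j
      have h := aux_sum_retr ρ (fun i => B i j)
      rw [hBsum j, mul_one] at h
      rw [hpjdef]
      simpa [retr, hρtr] using h
    set p : Fin k → ℝ := fun i => ∑ j, t j * pj j i with hpdef
    set q : Fin k → ℝ := fun i => ∑ j, t j * qj j i with hqdef
    have hfp : (fun i => retr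
        (((Matrix.diagonal fun j => ((t j : ℝ) : ℂ)) ⊗ₖ ρ) * Q i)) = p :=
      funext fun i => aux_trace_blk t ρ (Q i)
    have hfq : (fun i => retr
        (((Matrix.diagonal fun j => ((t j : ℝ) : ℂ)) ⊗ₖ σ) * Q i)) = q :=
      funext fun i => aux_trace_blk t σ (Q i)
    rw [hfp, hfq]
    have hp0 : ∀ i, 0 ≤ p i := fun i =>
      Finset.sum_nonneg fun j _ => mul_nonneg (ht j) (hpj0 j i)
    have hq0 : ∀ i, 0 ≤ q i := fun i =>
      Finset.sum_nonneg fun j _ => mul_nonneg (ht j) (hqj0 j i)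
    have habs : ∀ i, q i = 0 → p i = 0 := by
      intro i h
      have hz : ∀ j ∈ Finset.univ, t j * qj j i = 0 :=
        (Finset.sum_eq_zero_iff_of_nonneg
          (fun j _ => mul_nonneg (ht j) (hqj0 j i))).mp h
      refine Finset.sum_eq_zero fun j hj => ?_
      rcases mul_eq_zero.mp (hz j hj) with h0 | h0
      · rw [h0, zero_mul]
      · rw [hacj j i h0, mul_zero]
    have hp1 : ∑ i, p i = 1 := by
      rw [hpdef, Finset.sum_comm]
      have e : ∀ j, ∑ i, t j * pj j i = t j := fun j => by
        rw [← Finset.mul_sum, hpj1 j, mul_one]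
      rw [Finset.sum_congr rfl fun j _ => e j, ht1]
    set S : κ → ℝ := fun j => ∑ i, pj j i ^ α * qj j i ^ (1 - α) with hSdef
    have hSpos : ∀ j, 0 < S j := fun j =>
      aux_sum_pos hα0 (pj j) (qj j) (hpj0 j) (hqj0 j) (hacj j) (hpj1 j)
    have hSbpos : 0 < ∑ i, p i ^ α * q i ^ (1 - α) :=
      aux_sum_pos hα0 p q hp0 hq0 habs hp1
    have hterm : ∀ j i, (t j * pj j i) ^ α * (t j * qj j i) ^ (1 - α)
        = t j * (pj j i ^ α * qj j i ^ (1 - α)) := by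
      intro j i
      rcases eq_or_lt_of_le (ht j) with h0 | h0
      · rw [← h0, zero_mul, zero_mul, zero_mul, Real.zero_rpow hα0.ne', zero_mul]
      · rw [Real.mul_rpow h0.le (hpj0 j i), Real.mul_rpow h0.le (hqj0 j i)]
        have h1 : t j ^ α * t j ^ (1 - α) = t j := by
          rw [← Real.rpow_add h0, show α + (1 - α) = 1 by ring, Real.rpow_one]
        calc t j ^ α * pj j i ^ α * (t j ^ (1 - α) * qj j i ^ (1 - α))
            = t j ^ α * t j ^ (1 - α) * (pj j i ^ α * qj j i ^ (1 - α)) := by ring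
          _ = _ := by rw [h1]
    have hwt : ∀ j, ∑ i, (t j * pj j i) ^ α * (t j * qj j i) ^ (1 - α) = t j * S j := by
      intro j
      rw [hSdef, Finset.mul_sum]
      exact Finset.sum_congr rfl fun i _ => hterm j i
    have hκ : (Finset.univ : Finset κ).Nonempty := by
      rcases (Finset.univ : Finset κ).eq_empty_or_nonempty with h | h
      · rw [h, Finset.sum_empty] at ht1; norm_num at ht1
      · exact h
    obtain ⟨j₀, hle⟩ : ∃ j₀ : κ, (α - 1)⁻¹ * Real.log (∑ i, p i ^ α * q i ^ (1 - α))
        ≤ (α - 1)⁻¹ * Real.log (S j₀) := by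
      rcases hα with ⟨-, hα1⟩ | hα1
      · obtain ⟨j₀, -, hj₀⟩ := Finset.exists_min_image Finset.univ S hκ
        refine ⟨j₀, ?_⟩
        have hmid : S j₀ ≤ ∑ j, t j * S j := by
          calc S j₀ = ∑ j, t j * S j₀ := by rw [← Finset.sum_mul, ht1, one_mul]
            _ ≤ ∑ j, t j * S j := Finset.sum_le_sum fun j hj =>
                mul_le_mul_of_nonneg_left (hj₀ j (Finset.mem_univ j)) (ht j)
        have hup : ∑ j, t j * S j ≤ ∑ i, p i ^ α * q i ^ (1 - α) := by
          rw [Finset.sum_congr rfl fun j _ => (hwt j).symm, Finset.sum_comm]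
          refine Finset.sum_le_sum fun i _ => ?_
          exact aux_holder01 hα0 hα1 Finset.univ _ _
            (fun j => mul_nonneg (ht j) (hpj0 j i))
            (fun j => mul_nonneg (ht j) (hqj0 j i))
        have hc : (α - 1)⁻¹ ≤ 0 := le_of_lt (inv_neg''.mpr (by linarith))
        exact mul_le_mul_of_nonpos_left
          (Real.log_le_log (hSpos j₀) (hmid.trans hup)) hc
      · obtain ⟨j₀, -, hj₀⟩ := Finset.exists_max_image Finset.univ S hκ
        refine ⟨j₀, ?_⟩
        have hup : ∑ i, p i ^ α * q i ^ (1 - α) ≤ ∑ j, t j * S j := by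
          rw [Finset.sum_congr rfl fun j _ => (hwt j).symm, Finset.sum_comm]
          refine Finset.sum_le_sum fun i _ => ?_
          refine aux_holder_gt1 hα1 Finset.univ _ _
            (fun j => mul_nonneg (ht j) (hpj0 j i))
            (fun j => mul_nonneg (ht j) (hqj0 j i)) ?_
          intro j _ hb
          rcases mul_eq_zero.mp hb with h0 | h0
          · rw [h0, zero_mul]
          · rw [hacj j i h0, mul_zero]
        have hmid : ∑ j, t j * S j ≤ S j₀ := by
          calc ∑ j, t j * S j ≤ ∑ j, t j * S j₀ := Finset.sum_le_sum fun j hj =>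
                mul_le_mul_of_nonneg_left (hj₀ j (Finset.mem_univ j)) (ht j)
            _ = S j₀ := by rw [← Finset.sum_mul, ht1, one_mul]
        have hc : 0 ≤ (α - 1)⁻¹ := le_of_lt (inv_pos.mpr (by linarith))
        exact mul_le_mul_of_nonneg_left
          (Real.log_le_log hSbpos (hup.trans hmid)) hc
    have hcond : α < 1 ∨ ∀ i, q i = 0 → p i = 0 := by
      rcases hα with ⟨-, hα1⟩ | hα1
      · exact Or.inl hα1
      · exact Or.inr habs
    have hcondj : α < 1 ∨ ∀ i, qj j₀ i = 0 → pj j₀ i = 0 := by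
      rcases hα with ⟨-, hα1⟩ | hα1
      · exact Or.inl hα1
      · exact Or.inr (hacj j₀)
    have hbig : renyiDivE α p q
        = (((α - 1)⁻¹ * Real.log (∑ i, p i ^ α * q i ^ (1 - α)) : ℝ) : EReal) := by
      rw [renyiDivE, if_pos hcond]
    have hsmall : renyiDivE α (pj j₀) (qj j₀)
        = (((α - 1)⁻¹ * Real.log (S j₀) : ℝ) : EReal) := by
      rw [renyiDivE, if_pos hcondj, hSdef]
    rw [measuredRenyiDiv]
    refine le_trans ?_ (le_iSup_of_le k (le_iSup_of_le (fun i => B i j₀)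
      (le_iSup_of_le (fun i => hBpsd i j₀) (le_iSup_of_le (hBsum j₀) le_rfl))))
    have hfix : renyiDivE α (fun i => retr (ρ * B i j₀)) (fun i => retr (σ * B i j₀))
        = renyiDivE α (pj j₀) (qj j₀) := rfl
    rw [hbig, hfix, hsmall]
    exact EReal.coe_le_coe_iff.mpr hle
  · -- small ≤ big
    rw [measuredRenyiDiv, measuredRenyiDiv]
    refine iSup_le fun k => iSup_le fun P => iSup_le fun hP => iSup_le fun hP1 => ?_
    refine le_trans (le_of_eq ?_) (le_iSup_of_le k
      (le_iSup_of_le (fun i => (1 : Matrix κ κ ℂ) ⊗ₖ P i)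
        (le_iSup_of_le (fun i => aux_lift_psd (P i) (hP i))
          (le_iSup_of_le (aux_lift_sum P hP1) le_rfl))))
    rw [show (fun i => retr (((Matrix.diagonal fun j => ((t j : ℝ) : ℂ)) ⊗ₖ ρ)
          * ((1 : Matrix κ κ ℂ) ⊗ₖ P i))) = fun i => retr (ρ * P i) from
        funext fun i => aux_lift_retr t ht1 ρ (P i),
      show (fun i => retr (((Matrix.diagonal fun j => ((t j : ℝ) : ℂ)) ⊗ₖ σ)
          * ((1 : Matrix κ κ ℂ) ⊗ₖ P i))) = fun i => retr (σ * P i) from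
        funext fun i => aux_lift_retr t ht1 σ (P i)]

end
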